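/- If the transition kernel K is uniformly ergodic with (α, M), i.e., ‖K^j(x,·) − π‖_tv ≤ α^j M for all x and j, then for every x ∈ G and every family 𝒜 of Borel test sets, sup_{A∈𝒜} |n^{-1} Σ_{i=1}^n K^i(x,A) − π(A)| ≤ αM/(n(1−α)), and consequently the discrepancy of the Markov chain points and the push-back discrepancy of the driver sequence differ by at most αM/(n(1−α)): |D*_{𝒜,π}(P_n) − D*_{𝒜,φ}(U_n)| ≤ αM/(n(1−α)). -/

import Mathlib

open MeasureTheory Classical

/-- The unit cube `[0,1]^s`. -/
abbrev Cube (s : ℕ) := Fin s → unitInterval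

/-- Iterates of an update function on finite driver tuples:
`iterFin φ i x u = φ_i(x; u_1, …, u_i)`. -/
def iterFin {G : Type*} {s : ℕ} (φ : G → Cube s → G) :
    (i : ℕ) → G → (Fin i → Cube s) → G
  | 0, x, _ => x
  | n + 1, x, u => φ (iterFin φ n x (fun k => u k.castSucc)) (u (Fin.last n))

/-- The iterated transition kernel: `Kiter K 0 x = δ_x` and
`K^{i+1}(x,A) = ∫_G K(y,A) K^i(x,dy)`. -/
noncomputable def Kiter {G : Type*} [MeasurableSpace G] (K : G → Measure G) :
    ℕ → G → Measure G
  | 0, x => Measure.dirac x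
  | n + 1, x => (Kiter K n x).bind K

lemma measurable_iterFin {G : Type*} [MeasurableSpace G] {s : ℕ} {φ : G → Cube s → G}
    (hφ : Measurable fun p : G × Cube s => φ p.1 p.2) (i : ℕ) (x : G) :
    Measurable (iterFin φ i x) := by
  induction i with
  | zero => exact measurable_const
  | succ n ih =>
      have : Measurable fun u : Fin (n+1) → Cube s =>
          φ (iterFin φ n x (fun k => u k.castSucc)) (u (Fin.last n)) :=
        by
          have h1 : Measurable fun u : Fin (n+1) → Cube s =>
              iterFin φ n x (fun k => u k.castSucc) :=
            ih.comp (measurable_pi_lambda _ fun k => measurable_pi_apply _)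
          exact hφ.comp (h1.prodMk (measurable_pi_apply _))
      exact this

lemma Kiter_eq_map {G : Type*} [MeasurableSpace G] {s : ℕ}
    (K : G → Measure G) (φ : G → Cube s → G)
    (hprob : ∀ x, IsProbabilityMeasure (K x))
    (hKmeas : ∀ A : Set G, MeasurableSet A → Measurable fun x => K x A)
    (hφ : Measurable fun p : G × Cube s => φ p.1 p.2)
    (hupdate : ∀ (x : G) (A : Set G), MeasurableSet A →
      K x A = volume {u : Cube s | φ x u ∈ A})
    (i : ℕ) (x : G) :
    Kiter K i x = Measure.map (iterFin φ i x) volume := by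
  have hKm : Measurable K := Measure.measurable_of_measurable_coe K fun A hA => hKmeas A hA
  induction i with
  | zero =>
      show Measure.dirac x = _
      rw [show iterFin φ 0 x = fun _ => x from rfl, Measure.map_const, measure_univ, one_smul]
  | succ n ih =>
      show (Kiter K n x).bind K = _
      ext A hA
      rw [Measure.bind_apply hA hKm.aemeasurable, ih,
        lintegral_map (hKmeas A hA) (measurable_iterFin hφ n x),
        Measure.map_apply (measurable_iterFin hφ (n+1) x) hA]
      -- RHS : volume (iterFin φ (n+1) x ⁻¹' A)
      have e := MeasurableEquiv.piFinSuccAbove (fun _ : Fin (n + 1) => Cube s) (Fin.last n)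
      set S : Set (Cube s × (Fin n → Cube s)) :=
        {p | φ (iterFin φ n x p.2) p.1 ∈ A} with hS
      have hSm : MeasurableSet S := by
        have : Measurable fun p : Cube s × (Fin n → Cube s) =>
            φ (iterFin φ n x p.2) p.1 :=
          hφ.comp (((measurable_iterFin hφ n x).comp measurable_snd).prodMk measurable_fst)
        exact this hA
      have hpre : iterFin φ (n+1) x ⁻¹' A =
          (MeasurableEquiv.piFinSuccAbove (fun _ : Fin (n + 1) => Cube s) (Fin.last n)) ⁻¹' S := by
        ext v
        have hit : iterFin φ (n+1) x v
            = φ (iterFin φ n x (fun k => v k.castSucc)) (v (Fin.last n)) := rfl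
        simp [hS, MeasurableEquiv.piFinSuccAbove, Fin.insertNthEquiv, Fin.removeNth,
          Fin.succAbove_last, hit, Fin.init]
        exact Iff.rfl
      have hmp := measurePreserving_piFinSuccAbove
        (fun _ : Fin (n + 1) => (volume : Measure (Cube s))) (Fin.last n)
      have hvol : (volume : Measure (Fin (n+1) → Cube s)) = Measure.pi fun _ => volume := rfl
      rw [hpre, hvol]
      rw [hmp.measure_preimage hSm.nullMeasurableSet]
      rw [Measure.prod_apply_symm hSm]
      congr 1
      ext v
      rw [hupdate]
      · rfl
      · exact hA

/-- Corollary: if `K` is uniformly ergodic with `(α, M)`, then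
`sup_{A∈𝒜} |n⁻¹ Σ_{i=1}^n K^i(x,A) − π(A)| ≤ αM/(n(1−α))` and consequently
`|D*_{𝒜,π}(P_n) − D*_{𝒜,φ}(U_n)| ≤ αM/(n(1−α))`. -/
theorem discrepancy_sub_pushback_le_of_uniformlyErgodic {G : Type*} [MeasurableSpace G]
    {s : ℕ}
    (K : G → Measure G) (φ : G → Cube s → G) (π : Measure G) [IsProbabilityMeasure π]
    (hprob : ∀ x, IsProbabilityMeasure (K x))
    (hKmeas : ∀ A : Set G, MeasurableSet A → Measurable fun x => K x A)
    (hφ : Measurable fun p : G × Cube s => φ p.1 p.2)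
    (hstat : ∀ A : Set G, MeasurableSet A → ∫⁻ x, K x A ∂π = π A)
    (hupdate : ∀ (x : G) (A : Set G), MeasurableSet A →
      K x A = volume {u : Cube s | φ x u ∈ A})
    (α M : ℝ) (hα : 0 ≤ α) (hα1 : α < 1) (hM : 0 < M)
    (herg : ∀ (j : ℕ), 1 ≤ j → ∀ (y : G) (A : Set G), MeasurableSet A →
      |(Kiter K j y A).toReal - (π A).toReal| ≤ α ^ j * M)
    (𝒜 : Set (Set G)) (h𝒜 : ∀ A ∈ 𝒜, MeasurableSet A)
    (n : ℕ) (hn : 1 ≤ n) (x : G) (u : Fin n → Cube s) :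
    (⨆ A : 𝒜, |(n : ℝ)⁻¹ * ∑ i : Fin n, (Kiter K (i.1 + 1) x (A : Set G)).toReal
        - (π A).toReal|) ≤ α * M / (n * (1 - α)) ∧
    |(⨆ A : 𝒜, |(n : ℝ)⁻¹ * ∑ i : Fin n,
          (if iterFin φ (i.1 + 1) x (fun k => u (Fin.castLE i.isLt k)) ∈ (A : Set G)
            then (1 : ℝ) else 0) - (π A).toReal|)
      - (⨆ A : 𝒜, |(n : ℝ)⁻¹ * ∑ i : Fin n,
          ((if iterFin φ (i.1 + 1) x (fun k => u (Fin.castLE i.isLt k)) ∈ (A : Set G)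
              then (1 : ℝ) else 0)
            - (volume {v : Fin (i.1 + 1) → Cube s | iterFin φ (i.1 + 1) x v ∈ (A : Set G)}).toReal)|)|
    ≤ α * M / (n * (1 - α)) := by
  classical
  have hn0 : (0:ℝ) < n := by exact_mod_cast hn
  have h1α : (0:ℝ) < 1 - α := by linarith
  have hc0 : 0 ≤ α * M / (n * (1 - α)) :=
    div_nonneg (mul_nonneg hα hM.le) (mul_nonneg hn0.le h1α.le)
  set c := α * M / (n * (1 - α)) with hc
  -- geometric series bound
  have hgeo : (∑ i ∈ Finset.range n, α ^ i) ≤ (1 - α)⁻¹ := by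
    have hmul := geom_sum_mul α n
    have hpow : (0:ℝ) ≤ α ^ n := pow_nonneg hα n
    nlinarith [inv_mul_cancel₀ (ne_of_gt h1α), inv_pos.2 h1α]
  -- key pointwise estimate
  have key : ∀ A : Set G, MeasurableSet A →
      |(n:ℝ)⁻¹ * ∑ i : Fin n, (Kiter K (i.1 + 1) x A).toReal - (π A).toReal| ≤ c := by
    intro A hA
    have h1 : (n:ℝ)⁻¹ * ∑ i : Fin n, (Kiter K (i.1 + 1) x A).toReal - (π A).toReal
        = (n:ℝ)⁻¹ * ∑ i : Fin n, ((Kiter K (i.1 + 1) x A).toReal - (π A).toReal) := by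
      rw [Finset.sum_sub_distrib, Finset.sum_const, Finset.card_univ, Fintype.card_fin,
        mul_sub, nsmul_eq_mul, ← mul_assoc, inv_mul_cancel₀ (ne_of_gt hn0), one_mul]
    rw [h1]
    have h2 : |(n:ℝ)⁻¹ * ∑ i : Fin n, ((Kiter K (i.1 + 1) x A).toReal - (π A).toReal)|
        ≤ (n:ℝ)⁻¹ * ∑ i : Fin n, (α ^ (i.1 + 1) * M) := by
      rw [abs_mul, abs_of_nonneg (inv_nonneg.2 hn0.le)]
      refine mul_le_mul_of_nonneg_left ?_ (inv_nonneg.2 hn0.le)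
      refine (Finset.abs_sum_le_sum_abs _ _).trans ?_
      exact Finset.sum_le_sum fun i _ => herg (i.1 + 1) (Nat.le_add_left 1 i.1) x A hA
    refine h2.trans ?_
    have hsum : ∑ i : Fin n, (α ^ (i.1 + 1) * M)
        = (∑ i ∈ Finset.range n, α ^ i) * (α * M) := by
      rw [Fin.sum_univ_eq_sum_range (fun i => α ^ (i + 1) * M) n, Finset.sum_mul]
      exact Finset.sum_congr rfl fun i _ => by ring
    rw [hsum]
    have h3 : (n:ℝ)⁻¹ * ((∑ i ∈ Finset.range n, α ^ i) * (α * M))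
        ≤ (n:ℝ)⁻¹ * ((1 - α)⁻¹ * (α * M)) :=
      mul_le_mul_of_nonneg_left
        (mul_le_mul_of_nonneg_right hgeo (mul_nonneg hα hM.le)) (inv_nonneg.2 hn0.le)
    refine h3.trans (le_of_eq ?_)
    rw [hc]
    field_simp
  have hKmap := Kiter_eq_map K φ hprob hKmeas hφ hupdate
  have hvolset : ∀ (i : ℕ) (A : Set G), MeasurableSet A →
      (volume {v : Fin i → Cube s | iterFin φ i x v ∈ A}) = Kiter K i x A := by
    intro i A hA
    rw [hKmap i x, Measure.map_apply (measurable_iterFin hφ i x) hA]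
    rfl
  have hKprob : ∀ i : ℕ, IsProbabilityMeasure (Kiter K i x) := fun i => by
    rw [hKmap i x]
    exact Measure.isProbabilityMeasure_map (measurable_iterFin hφ i x).aemeasurable
  have hπ1 : ∀ A : Set G, (π A).toReal ≤ 1 := fun A =>
    (ENNReal.toReal_mono ENNReal.one_ne_top prob_le_one).trans_eq ENNReal.toReal_one
  have hKle : ∀ (i : ℕ) (A : Set G), (Kiter K i x A).toReal ≤ 1 := fun i A => by
    have := hKprob i
    exact (ENNReal.toReal_mono ENNReal.one_ne_top prob_le_one).trans_eq ENNReal.toReal_one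
  have havg : ∀ t : Fin n → ℝ, (∀ i, 0 ≤ t i) → (∀ i, t i ≤ 1) →
      0 ≤ (n:ℝ)⁻¹ * ∑ i : Fin n, t i ∧ (n:ℝ)⁻¹ * ∑ i : Fin n, t i ≤ 1 := by
    intro t h0 h1
    refine ⟨mul_nonneg (inv_nonneg.2 hn0.le) (Finset.sum_nonneg fun i _ => h0 i), ?_⟩
    have hs : ∑ i : Fin n, t i ≤ (n:ℝ) := by
      calc ∑ i : Fin n, t i ≤ ∑ _i : Fin n, (1:ℝ) := Finset.sum_le_sum fun i _ => h1 i
        _ = n := by simp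
    calc (n:ℝ)⁻¹ * ∑ i : Fin n, t i ≤ (n:ℝ)⁻¹ * n :=
          mul_le_mul_of_nonneg_left hs (inv_nonneg.2 hn0.le)
      _ = 1 := inv_mul_cancel₀ (ne_of_gt hn0)
  constructor
  · exact Real.iSup_le (fun A => key A (h𝒜 A A.2)) hc0
  · set F : 𝒜 → ℝ := fun A => |(n : ℝ)⁻¹ * ∑ i : Fin n,
        (if iterFin φ (i.1 + 1) x (fun k => u (Fin.castLE i.isLt k)) ∈ (A : Set G)
          then (1 : ℝ) else 0) - (π A).toReal| with hF
    set G' : 𝒜 → ℝ := fun A => |(n : ℝ)⁻¹ * ∑ i : Fin n,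
        ((if iterFin φ (i.1 + 1) x (fun k => u (Fin.castLE i.isLt k)) ∈ (A : Set G)
            then (1 : ℝ) else 0)
          - (volume {v : Fin (i.1 + 1) → Cube s | iterFin φ (i.1 + 1) x v ∈ (A : Set G)}).toReal)|
      with hG
    show |(⨆ A, F A) - (⨆ A, G' A)| ≤ c
    -- abbreviations per A
    have hGA : ∀ A : 𝒜, G' A =
        |((n : ℝ)⁻¹ * ∑ i : Fin n,
            (if iterFin φ (i.1 + 1) x (fun k => u (Fin.castLE i.isLt k)) ∈ (A : Set G)
              then (1 : ℝ) else 0))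
          - ((n : ℝ)⁻¹ * ∑ i : Fin n, (Kiter K (i.1 + 1) x (A : Set G)).toReal)| := by
      intro A
      have hs : (∑ i : Fin n,
          (volume {v : Fin (i.1 + 1) → Cube s | iterFin φ (i.1 + 1) x v ∈ (A : Set G)}).toReal)
          = ∑ i : Fin n, (Kiter K (i.1 + 1) x (A : Set G)).toReal :=
        Finset.sum_congr rfl fun i _ => by rw [hvolset (i.1 + 1) (A : Set G) (h𝒜 A A.2)]
      rw [hG]
      simp only
      rw [Finset.sum_sub_distrib, mul_sub, hs]
    have hXbd : ∀ A : 𝒜,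
        0 ≤ (n : ℝ)⁻¹ * ∑ i : Fin n,
            (if iterFin φ (i.1 + 1) x (fun k => u (Fin.castLE i.isLt k)) ∈ (A : Set G)
              then (1 : ℝ) else 0) ∧
        (n : ℝ)⁻¹ * ∑ i : Fin n,
            (if iterFin φ (i.1 + 1) x (fun k => u (Fin.castLE i.isLt k)) ∈ (A : Set G)
              then (1 : ℝ) else 0) ≤ 1 := fun A =>
      havg _ (fun i => by positivity) (fun i => by split <;> norm_num)
    have hYbd : ∀ A : 𝒜,
        0 ≤ (n : ℝ)⁻¹ * ∑ i : Fin n, (Kiter K (i.1 + 1) x (A : Set G)).toReal ∧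
        (n : ℝ)⁻¹ * ∑ i : Fin n, (Kiter K (i.1 + 1) x (A : Set G)).toReal ≤ 1 := fun A =>
      havg _ (fun i => ENNReal.toReal_nonneg) (fun i => hKle _ _)
    have hFG : ∀ A : 𝒜, F A ≤ G' A + c := by
      intro A
      have hY := key (A : Set G) (h𝒜 A A.2)
      rw [hF, hGA A]
      simp only
      set X := (n : ℝ)⁻¹ * ∑ i : Fin n,
        (if iterFin φ (i.1 + 1) x (fun k => u (Fin.castLE i.isLt k)) ∈ (A : Set G)
          then (1 : ℝ) else 0)
      set Y := (n : ℝ)⁻¹ * ∑ i : Fin n, (Kiter K (i.1 + 1) x (A : Set G)).toReal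
      calc |X - (π (A : Set G)).toReal| = |(X - Y) + (Y - (π (A : Set G)).toReal)| := by
              congr 1; ring
        _ ≤ |X - Y| + |Y - (π (A : Set G)).toReal| := abs_add_le _ _
        _ ≤ |X - Y| + c := add_le_add_right hY _
    have hGF : ∀ A : 𝒜, G' A ≤ F A + c := by
      intro A
      have hY := key (A : Set G) (h𝒜 A A.2)
      rw [hF, hGA A]
      simp only
      set X := (n : ℝ)⁻¹ * ∑ i : Fin n,
        (if iterFin φ (i.1 + 1) x (fun k => u (Fin.castLE i.isLt k)) ∈ (A : Set G)
          then (1 : ℝ) else 0)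
      set Y := (n : ℝ)⁻¹ * ∑ i : Fin n, (Kiter K (i.1 + 1) x (A : Set G)).toReal
      calc |X - Y| = |(X - (π (A : Set G)).toReal) + ((π (A : Set G)).toReal - Y)| := by
              congr 1; ring
        _ ≤ |X - (π (A : Set G)).toReal| + |(π (A : Set G)).toReal - Y| := abs_add_le _ _
        _ ≤ |X - (π (A : Set G)).toReal| + c := by
            rw [abs_sub_comm ((π (A : Set G)).toReal) Y]
            exact add_le_add_right hY _
    have hF2 : ∀ A : 𝒜, F A ≤ 2 := by
      intro A
      rw [hF]
      simp only
      have h0 := (hXbd A).1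
      have h1 := (hXbd A).2
      have h2 := hπ1 (A : Set G)
      have h3 : (0:ℝ) ≤ (π (A : Set G)).toReal := ENNReal.toReal_nonneg
      rw [abs_le]; constructor <;> linarith
    have hG2 : ∀ A : 𝒜, G' A ≤ 2 := by
      intro A
      rw [hGA A]
      have h0 := (hXbd A).1
      have h1 := (hXbd A).2
      have h2 := (hYbd A).1
      have h3 := (hYbd A).2
      rw [abs_le]; constructor <;> linarith
    have hbF : BddAbove (Set.range F) := ⟨2, by rintro _ ⟨A, rfl⟩; exact hF2 A⟩
    have hbG : BddAbove (Set.range G') := ⟨2, by rintro _ ⟨A, rfl⟩; exact hG2 A⟩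
    have hsG0 : 0 ≤ ⨆ A, G' A := Real.iSup_nonneg fun A => abs_nonneg _
    have hsF0 : 0 ≤ ⨆ A, F A := Real.iSup_nonneg fun A => abs_nonneg _
    have h1 : (⨆ A, F A) ≤ (⨆ A, G' A) + c :=
      Real.iSup_le (fun A => (hFG A).trans (add_le_add_left (le_ciSup hbG A) c))
        (by linarith)
    have h2 : (⨆ A, G' A) ≤ (⨆ A, F A) + c :=
      Real.iSup_le (fun A => (hGF A).trans (add_le_add_left (le_ciSup hbF A) c))
        (by linarith)
    exact abs_sub_le_iff.mpr ⟨by linarith, by linarith⟩
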